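/- For integers t > r ≥ 1 and m ≤ 2(t - r) + 1 with m ≥ 1 and n ≥ 1, the (t,r) broadcast domination number of the m × n king's grid graph equals ⌈(n + r - 1)/(2t - r)⌉. -/

import Mathlib

open List

namespace KingsGrid

/-! ### 1D capped signal machinery -/

def sig1 (t r : ℕ) (x y : ℤ) : ℕ := min r (t - (x - y).natAbs)

def g (t r : ℕ) (X : List ℤ) (y : ℤ) : ℕ := (X.map (fun x => sig1 t r x y)).sum

def Cov (t r : ℕ) (X : List ℤ) (N : ℕ) : Prop :=
  ∀ y : ℤ, 0 ≤ y → y < (N : ℤ) → r ≤ g t r X y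
lemma g_perm (t r : ℕ) {X Y : List ℤ} (h : X ~ Y) (y : ℤ) : g t r X y = g t r Y y :=
  (h.map _).sum_eq

lemma cov_clamp (t r : ℕ) (X : List ℤ) (N : ℕ) (h : Cov t r X N) :
    Cov t r (X.map (fun x => max 0 (min x ((N : ℤ) - 1)))) N := by
  intro y h0 hN
  refine le_trans (h y h0 hN) ?_
  unfold g
  rw [List.map_map]
  refine List.sum_le_sum ?_
  intro x _
  simp only [Function.comp]
  unfold sig1
  omega

lemma clamp_bounds (X : List ℤ) (N : ℕ) (hN : 1 ≤ N) :
    ∀ x ∈ X.map (fun x => max 0 (min x ((N : ℤ) - 1))), 0 ≤ x ∧ x < (N : ℤ) := by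
  intro x hx
  simp only [List.mem_map] at hx
  obtain ⟨a, _, rfl⟩ := hx
  omega

lemma exists_max : ∀ (L : List ℤ), L ≠ [] → ∃ a ∈ L, ∀ x ∈ L, x ≤ a := by
  intro L
  induction L with
  | nil => intro h; exact absurd rfl h
  | cons a l ih =>
    intro _
    rcases eq_or_ne l [] with rfl | hne
    · exact ⟨a, by simp⟩
    · obtain ⟨b, hb, hmax⟩ := ih hne
      rcases le_total a b with hab | hab
      · refine ⟨b, by simp [hb], ?_⟩
        intro x hx
        rcases List.mem_cons.1 hx with rfl | hx
        · exact hab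
        · exact hmax x hx
      · refine ⟨a, by simp, ?_⟩
        intro x hx
        rcases List.mem_cons.1 hx with rfl | hx
        · exact le_refl x
        · exact le_trans (hmax x hx) hab

set_option maxHeartbeats 1000000 in
lemma two_tower_le (t r : ℕ) (hr : 1 ≤ r) (hrt : r < t) (a b : ℤ) (n : ℕ) (hn : 1 ≤ n)
    (hab : a ≤ b)
    (hba : 0 ≤ a ∧ a < (n:ℤ)) (hbb : 0 ≤ b ∧ b < (n:ℤ))
    (hcov : Cov t r [a, b] n) : n ≤ 2 * (2*t - r) - r + 1 := by
  have h0 := hcov 0 le_rfl (by exact_mod_cast hn)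
  have hA := hcov ((n:ℤ) - 1) (by omega) (by omega)
  simp only [Cov, g, sig1, List.map, List.sum_cons, List.sum_nil] at h0 hA
  by_cases hb1 : (n:ℤ) - 1 - (t - r : ℕ) ≤ b
  · by_cases ha1 : a ≤ ((t - r : ℕ) : ℤ)
    · by_cases hgap : b - a ≤ 2 * ((t-r:ℕ):ℤ) + 1
      · omega
      · have hp := hcov (a + (t - r : ℕ) + 1) (by omega) (by omega)
        simp only [Cov, g, sig1, List.map, List.sum_cons, List.sum_nil] at hp
        omega
    · omega
  · omega

/-- Main 1D lower bound lemma. -/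
lemma oneD (t r : ℕ) (hr : 1 ≤ r) (hrt : r < t) :
    ∀ k (X : List ℤ) (n : ℕ), X.length = k → (∀ x ∈ X, 0 ≤ x ∧ x < (n:ℤ)) → 1 ≤ n →
      Cov t r X n → n + r - 1 ≤ k * (2*t - r) := by
  intro k
  induction k using Nat.strong_induction_on with
  | _ k IH =>
    intro X n hlen hbd hn hcov
    -- towers exist
    have hne : X ≠ [] := by
      intro h
      have := hcov 0 le_rfl (by exact_mod_cast hn)
      subst h
      simp [g] at this
      omega
    have hk1 : 1 ≤ k := by
      cases X with
      | nil => exact absurd rfl hne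
      | cons a l => simp at hlen; omega
    by_cases hsmall : n ≤ (2*t - r) - r + 1
    · -- one tower suffices for the bound
      have h1 : n + r - 1 ≤ 1 * (2*t - r) := by omega
      calc n + r - 1 ≤ 1 * (2*t-r) := h1
        _ ≤ k * (2*t-r) := Nat.mul_le_mul_right _ hk1
    · -- n ≥ c - r + 2 : at least two towers
      have hk2 : 2 ≤ k := by
        by_contra h
        have hk : k = 1 := by omega
        subst hk
        obtain ⟨x, rfl⟩ := List.length_eq_one_iff.1 hlen
        have h0 := hcov 0 le_rfl (by exact_mod_cast hn)
        have hA := hcov ((n:ℤ) - 1) (by omega) (by omega)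
        simp only [Cov, g, sig1, List.map, List.sum_cons, List.sum_nil] at h0 hA
        have hb := hbd x (by simp)
        omega
      by_cases hsmall2 : n ≤ 2 * (2*t - r) - r + 1
      · have h1 : n + r - 1 ≤ 2 * (2*t - r) := by omega
        calc n + r - 1 ≤ 2 * (2*t-r) := h1
          _ ≤ k * (2*t-r) := Nat.mul_le_mul_right _ hk2
      · -- n ≥ 2c - r + 2 : at least three towers
        have hk3 : 3 ≤ k := by
          by_contra h
          have hk : k = 2 := by omega
          subst hk
          obtain ⟨a, b, rfl⟩ := List.length_eq_two.1 hlen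
          have ha := hbd a (by simp)
          have hb := hbd b (by simp)
          rcases le_total a b with hab | hab
          · have := two_tower_le t r hr hrt a b n hn hab ha hb hcov
            omega
          · have hcov' : Cov t r [b, a] n := by
              intro y h0 hN
              rw [g_perm t r (by constructor : [b,a] ~ [a,b])]
              exact hcov y h0 hN
            have := two_tower_le t r hr hrt b a n hn hab hb ha hcov'
            omega
        by_cases hmed : n ≤ 2*t - 1
        · have h1 : n + r - 1 ≤ 3 * (2*t - r) := by omega
          calc n + r - 1 ≤ 3 * (2*t-r) := h1
            _ ≤ k * (2*t-r) := Nat.mul_le_mul_right _ hk3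
        · -- main case : n ≥ 2t and n ≥ 2c - r + 2
          have hn2t : 2*t ≤ n := by omega
          obtain ⟨xm, hxmem, hxmax⟩ := exists_max X hne
          set Y := X.erase xm with hY
          have hYperm : X ~ xm :: Y := List.perm_cons_erase hxmem
          have hYlen : Y.length = k - 1 := by
            rw [hY, List.length_erase_of_mem hxmem, hlen]
          by_cases hYcov : Cov t r Y (n - (2*t - r))
          · -- Case 4a
            have hnc : 1 ≤ n - (2*t-r) := by omega
            have hbd' := clamp_bounds Y (n - (2*t-r)) hnc
            have hcov' := cov_clamp t r Y (n - (2*t-r)) hYcov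
            have hlen' : ((Y.map (fun x => max 0 (min x (((n - (2*t-r) : ℕ) : ℤ) - 1)))).length) = k - 1 := by
              rw [List.length_map, hYlen]
            have := IH (k-1) (by omega) _ (n - (2*t-r)) hlen' hbd' hnc hcov'
            -- (n - c) + r - 1 ≤ (k-1)c  ⟹  n + r - 1 ≤ k c
            obtain ⟨k', rfl⟩ : ∃ k', k = k' + 1 := ⟨k - 1, by omega⟩
            simp only [Nat.add_sub_cancel] at this
            have hmul : (k' + 1) * (2*t-r) = k' * (2*t-r) + (2*t-r) := by ring
            omega
          · -- Case 4b
            simp only [Cov, not_forall] at hYcov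
            obtain ⟨y₀, hy0, hy1, hylt⟩ := hYcov
            push_neg at hylt
            have hy1' : y₀ < ((n : ℤ) - (2*t - r : ℕ)) := by
              have : (((n - (2*t-r) : ℕ)) : ℤ) = (n:ℤ) - ((2*t-r : ℕ) : ℤ) := by
                have : (2*t - r) ≤ n := by omega
                omega
              omega
            have hgX : r ≤ g t r X y₀ := hcov y₀ hy0 (by omega)
            have hgsplit : g t r X y₀ = sig1 t r xm y₀ + g t r Y y₀ := g_perm t r hYperm y₀
            have hxm1 : 1 ≤ sig1 t r xm y₀ := by omega
            have hxmle : xm ≤ y₀ + (t:ℤ) - 1 := by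
              unfold sig1 at hxm1
              omega
            -- split off the right-zone towers
            set p : ℤ → Bool := fun x => decide ((n:ℤ) - t ≤ x) with hp
            set W := X.filter p with hW
            set V := X.filter (fun x => !p x) with hV
            have hWVperm : W ++ V ~ X := List.filter_append_perm p X
            have hWmem : ∀ x ∈ W, (n:ℤ) - t ≤ x ∧ x ≤ y₀ + t - 1 := by
              intro x hx
              have h1 := List.mem_filter.1 hx
              have h2 : (n:ℤ) - t ≤ x := by
                have := h1.2
                simp [hp] at this
                omega
              exact ⟨h2, le_trans (hxmax x h1.1) hxmle⟩
            have hVmem : ∀ x ∈ V, x < (n:ℤ) - t := by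
              intro x hx
              have h1 := List.mem_filter.1 hx
              have := h1.2
              simp [hp] at this
              omega
            -- coverage of the right end comes only from W, each capped at r-1
            have hgA : r ≤ g t r X ((n:ℤ)-1) := hcov ((n:ℤ)-1) (by omega) (by omega)
            have hsplitA : g t r X ((n:ℤ)-1) = g t r W ((n:ℤ)-1) + g t r V ((n:ℤ)-1) := by
              rw [← g_perm t r hWVperm]
              simp [g]
            have hVzero : g t r V ((n:ℤ)-1) = 0 := by
              unfold g
              apply List.sum_eq_zero
              intro s hs
              simp only [List.mem_map] at hs
              obtain ⟨x, hx, rfl⟩ := hs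
              have := hVmem x hx
              unfold sig1
              omega
            have hWA : r ≤ g t r W ((n:ℤ)-1) := by omega
            have hWsm : ∀ s ∈ W.map (fun x => sig1 t r x ((n:ℤ)-1)), s ≤ r - 1 := by
              intro s hs
              simp only [List.mem_map] at hs
              obtain ⟨x, hx, rfl⟩ := hs
              have h2 := hWmem x hx
              unfold sig1
              omega
            have hWcardsum : g t r W ((n:ℤ)-1) ≤ W.length * (r - 1) := by
              have := List.sum_le_card_nsmul (W.map (fun x => sig1 t r x ((n:ℤ)-1))) (r-1) hWsm
              simpa [g] using this
            have hs2 : 2 ≤ W.length := by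
              by_contra h
              have h1 : W.length ≤ 1 := by omega
              have : W.length * (r-1) ≤ 1 * (r - 1) := Nat.mul_le_mul_right _ h1
              omega
            -- V covers [0, n - 2t]
            have hVcov : Cov t r V (n - 2*t + 1) := by
              intro y h0 hNv
              have hyn : y < (n:ℤ) := by
                have : ((n - 2*t + 1 : ℕ) : ℤ) ≤ (n:ℤ) := by
                  push_cast
                  omega
                omega
              have hgy : r ≤ g t r X y := hcov y h0 hyn
              have hsplity : g t r X y = g t r W y + g t r V y := by
                rw [← g_perm t r hWVperm]
                simp [g]
              have hWzero : g t r W y = 0 := by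
                unfold g
                apply List.sum_eq_zero
                intro s hs
                simp only [List.mem_map] at hs
                obtain ⟨x, hx, rfl⟩ := hs
                have h2 := hWmem x hx
                have hy2 : y ≤ (n:ℤ) - 2*t := by
                  have : ((n - 2*t + 1 : ℕ) : ℤ) = (n:ℤ) - 2*t + 1 := by push_cast; omega
                  omega
                unfold sig1
                omega
              omega
            have hWVk : W.length + V.length = k := by
              rw [← hlen, ← List.Perm.length_eq hWVperm]
              simp
            have hVlen : V.length = k - W.length := by omega
            have hnv : 1 ≤ n - 2*t + 1 := by omega
            have hbd' := clamp_bounds V (n - 2*t + 1) hnv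
            have hcov' := cov_clamp t r V (n - 2*t + 1) hVcov
            have hlen' : ((V.map (fun x => max 0 (min x (((n - 2*t + 1 : ℕ) : ℤ) - 1)))).length) = k - W.length := by
              rw [List.length_map, hVlen]
            have hrec := IH (k - W.length) (by omega) _ (n - 2*t + 1) hlen' hbd' hnv hcov'
            -- (n - 2t + 1) + r - 1 ≤ (k - s) c, s ≥ 2 ⟹ n + r - 1 ≤ k c
            have hsk : W.length ≤ k := by omega
            have hmul : k * (2*t-r) = (k - W.length) * (2*t-r) + W.length * (2*t-r) := by
              rw [← Nat.add_mul, Nat.sub_add_cancel hsk]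
            have hsc : 2 * (2*t-r) ≤ W.length * (2*t-r) := Nat.mul_le_mul_right _ hs2
            omega

lemma sum_min (r : ℕ) : ∀ (l : List ℕ), min r l.sum ≤ (l.map (fun s => min r s)).sum := by
  intro l
  induction l with
  | nil => simp
  | cons a tl ih =>
    simp only [List.sum_cons, List.map, List.sum_cons]
    omega

/-- From a grid dominating set we get a 1D capped cover by the column multiset. -/
lemma grid_to_1d (m n t r : ℕ) (hr : 1 ≤ r) (hm1 : 1 ≤ m) (hn1 : 1 ≤ n)
    (T : Finset (Fin m × Fin n))
    (hcov : ∀ v : Fin m × Fin n, r ≤ ∑ w ∈ T,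
      (t - max (((v.1.val : ℤ) - (w.1.val : ℤ)).natAbs) (((v.2.val : ℤ) - (w.2.val : ℤ)).natAbs))) :
    Cov t r (T.toList.map (fun w => ((w.2.val : ℤ)))) n := by
  intro y h0 hy
  have hvy : ((y.toNat : ℕ) : ℤ) = y := Int.toNat_of_nonneg h0
  set v : Fin m × Fin n := (⟨0, hm1⟩, ⟨y.toNat, by omega⟩) with hv
  have h := hcov v
  rw [← Finset.sum_map_toList] at h
  have h2 : min r ((T.toList.map (fun w =>
      (t - max (((v.1.val : ℤ) - (w.1.val : ℤ)).natAbs) (((v.2.val : ℤ) - (w.2.val : ℤ)).natAbs)))).sum)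
      = r := by omega
  have h3 := sum_min r (T.toList.map (fun w =>
      (t - max (((v.1.val : ℤ) - (w.1.val : ℤ)).natAbs) (((v.2.val : ℤ) - (w.2.val : ℤ)).natAbs))))
  rw [h2] at h3
  refine le_trans h3 ?_
  unfold g
  rw [List.map_map, List.map_map]
  refine List.sum_le_sum ?_
  intro w _
  simp only [Function.comp]
  unfold sig1
  have hcol : ((v.2.val : ℤ)) = y := by
    simp [hv, hvy]
  rw [hcol]
  omega

section upper

variable (m n t r : ℕ)

lemma sub_one_mul_add {K c : ℕ} (h : 1 ≤ K) : (K-1)*c + c = K*c := by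
  cases K with
  | zero => omega
  | succ p => simp [Nat.succ_sub_one, Nat.succ_mul]

/-- tower column positions -/
def pos (n t r : ℕ) (i : ℕ) : ℕ := min ((t - r) + i * (2*t - r)) (n - 1)

lemma pos_lt (hn1 : 1 ≤ n) (i : ℕ) : pos n t r i < n := by
  unfold pos; omega

/-- number of towers -/
def KK (n t r : ℕ) : ℕ := (n + r - 1 + (2*t - r) - 1) / (2*t - r)

lemma KK_mul (hr : 1 ≤ r) (hrt : r < t) (hn1 : 1 ≤ n) :
    n + r - 1 ≤ KK n t r * (2*t - r) ∧ 1 ≤ KK n t r ∧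
      (KK n t r - 1) * (2*t - r) ≤ n + r - 2 := by
  have hc : 1 ≤ 2*t - r := by omega
  have hdm := Nat.div_add_mod (n + r - 1 + (2*t - r) - 1) (2*t - r)
  have hmlt : (n + r - 1 + (2*t - r) - 1) % (2*t - r) < 2*t - r := Nat.mod_lt _ (by omega)
  set K := KK n t r with hK
  have hKc : 2*t - r ≤ (2*t-r) * K → True := fun _ => trivial
  -- atoms
  have h1 : (2*t-r) * K + (n + r - 1 + (2*t - r) - 1) % (2*t - r) = n + r - 1 + (2*t-r) - 1 := hdm
  have hK1 : 1 ≤ K := by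
    rcases Nat.eq_zero_or_pos K with h | h
    · rw [h] at h1; simp at h1; omega
    · exact h
  have hsub : (K - 1) * (2*t-r) + (2*t-r) = K * (2*t-r) := sub_one_mul_add hK1
  have hcomm : K * (2*t-r) = (2*t-r) * K := Nat.mul_comm _ _
  refine ⟨by omega, hK1, by omega⟩

lemma pos_gap (i : ℕ) : pos n t r (i+1) ≤ pos n t r i + (2*t - r) := by
  unfold pos
  have : (i+1) * (2*t-r) = i * (2*t-r) + (2*t-r) := by ring
  omega

lemma pos_last (hr : 1 ≤ r) (hrt : r < t) (hn1 : 1 ≤ n) :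
    n - 1 ≤ pos n t r (KK n t r - 1) + (t - r) := by
  obtain ⟨hKc, hK1, hK2⟩ := KK_mul n t r hr hrt hn1
  unfold pos
  have hsub : (KK n t r - 1) * (2*t-r) + (2*t-r) = KK n t r * (2*t-r) := sub_one_mul_add hK1
  omega

lemma pos_strict (hr : 1 ≤ r) (hrt : r < t) (hn1 : 1 ≤ n) (i j : ℕ)
    (hij : i < j) (hjK : j < KK n t r) : pos n t r i < pos n t r j := by
  obtain ⟨hKc, hK1, hK2⟩ := KK_mul n t r hr hrt hn1
  have hiK2 : i ≤ KK n t r - 2 := by omega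
  have h1 : i * (2*t-r) ≤ (KK n t r - 2) * (2*t-r) := Nat.mul_le_mul_right _ hiK2
  have h2 : (KK n t r - 2) * (2*t-r) + (2*t-r) = (KK n t r - 1) * (2*t-r) := by
    rcases Nat.exists_eq_add_of_le (show 2 ≤ KK n t r by omega) with ⟨p, hp⟩
    rw [hp]
    have e1 : 2 + p - 2 = p := by omega
    have e2 : 2 + p - 1 = p + 1 := by omega
    rw [e1, e2]
    ring
  -- so (t-r) + i*(2t-r) ≤ n - 2 - (t - r) < n - 1
  have hlow : (t - r) + i * (2*t-r) + (2*t - r) ≤ (t-r) + (KK n t r - 1) * (2*t-r) := by omega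
  have hup : (t-r) + (KK n t r - 1)*(2*t-r) ≤ n - 2 + (2*t-r) - (t - r) := by omega
  have h3 : (i+1) * (2*t-r) ≤ j * (2*t-r) := Nat.mul_le_mul_right _ (by omega)
  have h4 : (i+1) * (2*t-r) = i * (2*t-r) + (2*t-r) := by ring
  unfold pos
  omega

end upper
/-- The dominating set construction. -/
lemma grid_upper (m n t r : ℕ) (hr : 1 ≤ r) (hrt : r < t)
    (hm1 : 1 ≤ m) (hn1 : 1 ≤ n) (hm : m ≤ 2 * (t - r) + 1)
    (hKc : n + r - 1 ≤ KK n t r * (2*t - r)) (hK1 : 1 ≤ KK n t r)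
    (hlast : n - 1 ≤ pos n t r (KK n t r - 1) + (t - r))
    (hstrict : ∀ i j, i < j → j < KK n t r → pos n t r i < pos n t r j) :
    ∃ T : Finset (Fin m × Fin n), T.card = KK n t r ∧
      ∀ v : Fin m × Fin n, r ≤ ∑ w ∈ T,
        (t - max (((v.1.val : ℤ) - (w.1.val : ℤ)).natAbs) (((v.2.val : ℤ) - (w.2.val : ℤ)).natAbs)) := by
  set y₀ : ℕ := (m - 1) / 2 with hy₀
  have hy₀m : y₀ < m := by omega
  have hposlt : ∀ i, pos n t r i < n := by intro i; unfold pos; omega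
  set f : ℕ → Fin m × Fin n := fun i => (⟨y₀, hy₀m⟩, ⟨pos n t r i, hposlt i⟩) with hf
  refine ⟨(Finset.range (KK n t r)).image f, ?_, ?_⟩
  · rw [Finset.card_image_of_injOn, Finset.card_range]
    intro i hi j hj hij
    simp only [Finset.mem_coe, Finset.mem_range] at hi hj
    by_contra hne
    rcases Nat.lt_or_ge i j with h | h
    · have := hstrict i j h hj
      have : pos n t r i = pos n t r j := congrArg (fun w => (w.2 : Fin n).val) hij
      omega
    · have hji : j < i := by omega
      have := hstrict j i hji hi
      have : pos n t r i = pos n t r j := congrArg (fun w => (w.2 : Fin n).val) hij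
      omega
  · intro v
    -- row distance is small
    have hrow : ((v.1.val : ℤ) - (y₀ : ℤ)).natAbs ≤ t - r := by
      have := v.1.isLt
      omega
    set b : ℕ := v.2.val with hb
    have hbn : b < n := v.2.isLt
    -- helper : a single near tower suffices
    have single : ∀ i, i < KK n t r → ((b:ℤ) - (pos n t r i : ℤ)).natAbs ≤ t - r →
        r ≤ ∑ w ∈ (Finset.range (KK n t r)).image f,
          (t - max (((v.1.val : ℤ) - (w.1.val : ℤ)).natAbs) (((v.2.val : ℤ) - (w.2.val : ℤ)).natAbs)) := by
      intro i hi hnear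
      have hmem : f i ∈ (Finset.range (KK n t r)).image f :=
        Finset.mem_image_of_mem f (Finset.mem_range.2 hi)
      have hterm : r ≤ (t - max (((v.1.val : ℤ) - ((f i).1.val : ℤ)).natAbs)
          (((v.2.val : ℤ) - ((f i).2.val : ℤ)).natAbs)) := by
        simp only [hf]
        omega
      exact le_trans hterm (Finset.single_le_sum (f := fun w =>
        (t - max (((v.1.val : ℤ) - (w.1.val : ℤ)).natAbs) (((v.2.val : ℤ) - (w.2.val : ℤ)).natAbs)))
        (fun w _ => Nat.zero_le _) hmem)
    -- the index set of towers at or left of b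
    set I : Finset ℕ := (Finset.range (KK n t r)).filter (fun i => pos n t r i ≤ b) with hI
    rcases Finset.eq_empty_or_nonempty I with hIe | hIne
    · -- b left of first tower
      have h0 : ¬ (pos n t r 0 ≤ b) := by
        intro hcon
        have : (0:ℕ) ∈ I := by
          rw [hI]
          exact Finset.mem_filter.2 ⟨Finset.mem_range.2 (by omega), hcon⟩
        rw [hIe] at this
        simp at this
      have hp0 : pos n t r 0 ≤ (t - r) := by unfold pos; simp
      exact single 0 (by omega) (by omega)
    · set i₀ : ℕ := I.max' hIne with hi₀
      have hi₀I : i₀ ∈ I := I.max'_mem hIne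
      have hi₀K : i₀ < KK n t r := Finset.mem_range.1 (Finset.mem_filter.1 hi₀I).1
      have hi₀le : pos n t r i₀ ≤ b := (Finset.mem_filter.1 hi₀I).2
      by_cases hnear : b ≤ pos n t r i₀ + (t - r)
      · exact single i₀ hi₀K (by omega)
      · -- b is strictly right of tower i₀'s plateau
        have hi₀K' : i₀ + 1 < KK n t r := by
          by_contra hcon
          have : i₀ = KK n t r - 1 := by omega
          rw [this] at hi₀le hnear
          omega
        have hnotI : ¬ (pos n t r (i₀+1) ≤ b) := by
          intro hcon
          have hmem : (i₀+1) ∈ I := by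
            rw [hI]
            exact Finset.mem_filter.2 ⟨Finset.mem_range.2 hi₀K', hcon⟩
          have := Finset.le_max' I (i₀+1) hmem
          omega
        have hgap : pos n t r (i₀+1) ≤ pos n t r i₀ + (2*t - r) := by
          unfold pos
          have : (i₀+1) * (2*t-r) = i₀ * (2*t-r) + (2*t-r) := by ring
          omega
        -- two towers
        have hne : f i₀ ≠ f (i₀+1) := by
          intro hcon
          have : pos n t r i₀ = pos n t r (i₀+1) := congrArg (fun w => (w.2 : Fin n).val) hcon
          omega
        have hsub : {f i₀, f (i₀+1)} ⊆ (Finset.range (KK n t r)).image f := by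
          intro w hw
          rcases Finset.mem_insert.1 hw with rfl | hw
          · exact Finset.mem_image_of_mem f (Finset.mem_range.2 (by omega))
          · rw [Finset.mem_singleton.1 hw]
            exact Finset.mem_image_of_mem f (Finset.mem_range.2 hi₀K')
        have hpair := Finset.sum_pair (f := fun w =>
          (t - max (((v.1.val : ℤ) - ((w).1.val : ℤ)).natAbs) (((v.2.val : ℤ) - ((w).2.val : ℤ)).natAbs))) hne
        have hterms : r ≤
            (t - max (((v.1.val : ℤ) - ((f i₀).1.val : ℤ)).natAbs) (((v.2.val : ℤ) - ((f i₀).2.val : ℤ)).natAbs)) +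
            (t - max (((v.1.val : ℤ) - ((f (i₀+1)).1.val : ℤ)).natAbs) (((v.2.val : ℤ) - ((f (i₀+1)).2.val : ℤ)).natAbs)) := by
          simp only [hf]
          clear hpair hsub hne single
          omega
        calc r ≤ _ := hterms
          _ = ∑ w ∈ ({f i₀, f (i₀+1)} : Finset (Fin m × Fin n)),
              (t - max (((v.1.val : ℤ) - (w.1.val : ℤ)).natAbs) (((v.2.val : ℤ) - (w.2.val : ℤ)).natAbs)) := hpair.symm
          _ ≤ _ := Finset.sum_le_sum_of_subset hsub

/-! ### Lower bound glue -/

lemma grid_lower (m n t r : ℕ) (hr : 1 ≤ r) (hrt : r < t)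
    (hm1 : 1 ≤ m) (hn1 : 1 ≤ n)
    (T : Finset (Fin m × Fin n))
    (hcov : ∀ v : Fin m × Fin n, r ≤ ∑ w ∈ T,
      (t - max (((v.1.val : ℤ) - (w.1.val : ℤ)).natAbs) (((v.2.val : ℤ) - (w.2.val : ℤ)).natAbs))) :
    KK n t r ≤ T.card := by
  have hc : 1 ≤ 2*t - r := by omega
  have hCov := grid_to_1d m n t r hr hm1 hn1 T hcov
  have hlen : (T.toList.map (fun w => ((w.2.val : ℤ)))).length = T.card := by
    rw [List.length_map, Finset.length_toList]
  have hbd : ∀ x ∈ T.toList.map (fun w => ((w.2.val : ℤ))), 0 ≤ x ∧ x < (n:ℤ) := by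
    intro x hx
    simp only [List.mem_map] at hx
    obtain ⟨w, _, rfl⟩ := hx
    have := w.2.isLt
    omega
  have hone := oneD t r hr hrt T.card _ n hlen hbd hn1 hCov
  -- n + r - 1 ≤ card * (2t - r)  ⟹  KK ≤ card
  by_contra hcon
  push_neg at hcon
  have h1 : T.card + 1 ≤ KK n t r := hcon
  have h2 : (T.card + 1) * (2*t-r) ≤ KK n t r * (2*t-r) := Nat.mul_le_mul_right _ h1
  have h3 : KK n t r * (2*t-r) ≤ n + r - 1 + (2*t-r) - 1 := by
    have := Nat.div_mul_le_self (n + r - 1 + (2*t - r) - 1) (2*t - r)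
    exact this
  have h4 : (T.card + 1) * (2*t-r) = T.card * (2*t-r) + (2*t-r) := by ring
  omega

end KingsGrid

/-- For t > r ≥ 1 and m ≤ 2(t-r) + 1, the (t,r) broadcast domination number of the
m × n king's grid graph (Chebyshev distance) equals ⌈(n + r - 1)/(2t - r)⌉. -/
theorem kings_grid_domination_number (m n t r : ℕ) (hr : 1 ≤ r) (hrt : r < t)
    (hm1 : 1 ≤ m) (hn1 : 1 ≤ n) (hm : m ≤ 2 * (t - r) + 1) :
    sInf {k : ℕ | ∃ T : Finset (Fin m × Fin n), T.card = k ∧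
        ∀ v : Fin m × Fin n, r ≤ ∑ w ∈ T,
          (t - max (((v.1.val : ℤ) - (w.1.val : ℤ)).natAbs)
                   (((v.2.val : ℤ) - (w.2.val : ℤ)).natAbs))} =
      (n + r - 1 + (2 * t - r) - 1) / (2 * t - r) := by
  classical
  obtain ⟨hKc, hK1, hK2⟩ := KingsGrid.KK_mul n t r hr hrt hn1
  have hlast := KingsGrid.pos_last n t r hr hrt hn1
  have hstrict := KingsGrid.pos_strict n t r hr hrt hn1
  obtain ⟨T, hTcard, hTcov⟩ :=
    KingsGrid.grid_upper m n t r hr hrt hm1 hn1 hm hKc hK1 hlast hstrict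
  have hKKdef : KingsGrid.KK n t r = (n + r - 1 + (2 * t - r) - 1) / (2 * t - r) := rfl
  rw [← hKKdef]
  apply _root_.le_antisymm
  · exact Nat.sInf_le ⟨T, hTcard, hTcov⟩
  · refine le_csInf ⟨T.card, T, rfl, hTcov⟩ ?_
    rintro j ⟨T', hT'card, hT'cov⟩
    have := KingsGrid.grid_lower m n t r hr hrt hm1 hn1 T' hT'cov
    omega
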